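/- A function g : ℕ → ℤ (modeling a counter value over time on a run of length N) that is monotone on each of r+1 pieces (alternating between nondecreasing and nonincreasing, i.e., making at most r reversals) visits at most (r+1) * (2n+1) distinct regions determined by n constants: formally, the number of indices i < N at which g crosses from one region to a different region is at most (r+1) * (2n+1). -/

import Mathlib

/-- The region index of a value `v` with respect to the nondecreasing constants `c`:
region `0` is below `c 0`, region `1` is `{c 0}`, region `2` is strictly between
`c 0` and `c 1`, …, region `2n` is above `c (n-1)`. -/
def reg (n : ℕ) (c : Fin n → ℕ) (v : ℤ) : Fin (2 * n + 1) :=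
  ⟨(Finset.univ.filter (fun i : Fin n => ((c i : ℤ) < v))).card +
      (Finset.univ.filter (fun i : Fin n => ((c i : ℤ) ≤ v))).card, by
    have h1 := Finset.card_filter_le (Finset.univ : Finset (Fin n))
      (fun i : Fin n => ((c i : ℤ) < v))
    have h2 := Finset.card_filter_le (Finset.univ : Finset (Fin n))
      (fun i : Fin n => ((c i : ℤ) ≤ v))
    simp only [Finset.card_univ, Fintype.card_fin] at h1 h2
    omega⟩

lemma reg_val_mono (n : ℕ) (c : Fin n → ℕ) : Monotone (fun v => (reg n c v).val) := by
  intro v w hvw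
  simp only [reg]
  have h1 : (Finset.univ.filter (fun i : Fin n => ((c i : ℤ) < v))).card ≤
      (Finset.univ.filter (fun i : Fin n => ((c i : ℤ) < w))).card := by
    apply Finset.card_le_card
    intro i hi
    simp only [Finset.mem_filter, Finset.mem_univ, true_and] at hi ⊢
    omega
  have h2 : (Finset.univ.filter (fun i : Fin n => ((c i : ℤ) ≤ v))).card ≤
      (Finset.univ.filter (fun i : Fin n => ((c i : ℤ) ≤ w))).card := by
    apply Finset.card_le_card
    intro i hi
    simp only [Finset.mem_filter, Finset.mem_univ, true_and] at hi ⊢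
    omega
  omega

lemma changes_le_mono (f : ℕ → ℕ) (a b : ℕ) (hab : a ≤ b)
    (hm : MonotoneOn f (Set.Icc a b)) :
    ((Finset.Ico a b).filter (fun i => f i ≠ f (i + 1))).card ≤ f b - f a := by
  induction b, hab using Nat.le_induction with
  | base => simp
  | succ b hab ih =>
    have hsub : MonotoneOn f (Set.Icc a b) :=
      hm.mono (Set.Icc_subset_Icc_right (by omega))
    have h1 := ih hsub
    have hfb : f b ≤ f (b + 1) :=
      hm (Set.mem_Icc.mpr ⟨hab, by omega⟩) (Set.mem_Icc.mpr ⟨by omega, le_refl _⟩) (by omega)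
    have hfa : f a ≤ f b := hsub (Set.mem_Icc.mpr ⟨le_refl _, hab⟩)
      (Set.mem_Icc.mpr ⟨hab, le_refl _⟩) hab
    rw [Nat.Ico_succ_right_eq_insert_Ico hab, Finset.filter_insert]
    by_cases h : f b = f (b + 1)
    · rw [if_neg (by simp [h])]
      omega
    · rw [if_pos h, Finset.card_insert_of_notMem (by simp)]
      omega

lemma changes_le_anti (f : ℕ → ℕ) (a b : ℕ) (hab : a ≤ b)
    (hm : AntitoneOn f (Set.Icc a b)) :
    ((Finset.Ico a b).filter (fun i => f i ≠ f (i + 1))).card ≤ f a - f b := by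
  induction b, hab using Nat.le_induction with
  | base => simp
  | succ b hab ih =>
    have hsub : AntitoneOn f (Set.Icc a b) :=
      hm.mono (Set.Icc_subset_Icc_right (by omega))
    have h1 := ih hsub
    have hfb : f (b + 1) ≤ f b :=
      hm (Set.mem_Icc.mpr ⟨hab, by omega⟩) (Set.mem_Icc.mpr ⟨by omega, le_refl _⟩) (by omega)
    have hfa : f b ≤ f a := hsub (Set.mem_Icc.mpr ⟨le_refl _, hab⟩)
      (Set.mem_Icc.mpr ⟨hab, le_refl _⟩) hab
    rw [Nat.Ico_succ_right_eq_insert_Ico hab, Finset.filter_insert]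
    by_cases h : f b = f (b + 1)
    · rw [if_neg (by simp [h])]
      omega
    · rw [if_pos h, Finset.card_insert_of_notMem (by simp)]
      omega

lemma piece_changes (n : ℕ) (c : Fin n → ℕ) (g : ℕ → ℤ) (a b : ℕ) (hab : a ≤ b)
    (h : MonotoneOn g (Set.Icc a b) ∨ AntitoneOn g (Set.Icc a b)) :
    ((Finset.Ico a b).filter (fun i => reg n c (g i) ≠ reg n c (g (i + 1)))).card ≤ 2 * n := by
  set f : ℕ → ℕ := fun i => (reg n c (g i)).val with hf
  have hpred : ∀ i, (reg n c (g i) ≠ reg n c (g (i + 1))) ↔ (f i ≠ f (i + 1)) := by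
    intro i
    simp [hf, Fin.val_eq_val]
  have hcard : ((Finset.Ico a b).filter (fun i => reg n c (g i) ≠ reg n c (g (i + 1)))).card =
      ((Finset.Ico a b).filter (fun i => f i ≠ f (i + 1))).card := by
    congr 1
    apply Finset.filter_congr
    intro i _
    simp [hpred i]
  rw [hcard]
  have hbound : ∀ i, f i ≤ 2 * n := fun i =>
    Nat.lt_succ_iff.mp (reg n c (g i)).is_lt
  rcases h with hmono | hanti
  · have hfm : MonotoneOn f (Set.Icc a b) := fun x hx y hy hxy =>
      reg_val_mono n c (hmono hx hy hxy)
    have := changes_le_mono f a b hab hfm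
    have := hbound b
    omega
  · have hfm : AntitoneOn f (Set.Icc a b) := fun x hx y hy hxy =>
      reg_val_mono n c (hanti hx hy hxy)
    have := changes_le_anti f a b hab hfm
    have := hbound a
    omega

theorem stmt_4 (n r N : ℕ) (c : Fin n → ℕ) (hc : Monotone c)
    (g : ℕ → ℤ)
    (hpieces : ∃ b : Fin (r + 2) → ℕ, b 0 = 0 ∧ b (Fin.last (r + 1)) = N ∧ Monotone b ∧
      ∀ j : Fin (r + 1),
        MonotoneOn g (Set.Icc (b j.castSucc) (b j.succ)) ∨
        AntitoneOn g (Set.Icc (b j.castSucc) (b j.succ))) :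
    ((Finset.range N).filter
        (fun i => reg n c (g i) ≠ reg n c (g (i + 1)))).card ≤ (r + 1) * (2 * n + 1) := by
  obtain ⟨b, hb0, hbN, hbmono, hpiece⟩ := hpieces
  have key : ∀ k (hk : k ≤ r + 1),
      ((Finset.range (b ⟨k, by omega⟩)).filter
        (fun i => reg n c (g i) ≠ reg n c (g (i + 1)))).card ≤ k * (2 * n) := by
    intro k
    induction k with
    | zero =>
      intro hk
      have : (⟨0, by omega⟩ : Fin (r + 2)) = 0 := rfl
      rw [this, hb0]
      simp
    | succ k ih =>
      intro hk
      have hk' : k ≤ r + 1 := by omega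
      have hle : b ⟨k, by omega⟩ ≤ b ⟨k + 1, by omega⟩ := hbmono (by simp)
      have hsplit : Finset.range (b ⟨k + 1, by omega⟩) =
          Finset.range (b ⟨k, by omega⟩) ∪
            Finset.Ico (b ⟨k, by omega⟩) (b ⟨k + 1, by omega⟩) := by
        rw [Finset.range_eq_Ico, Finset.range_eq_Ico]
        exact (Finset.Ico_union_Ico_eq_Ico (Nat.zero_le _) hle).symm
      rw [hsplit, Finset.filter_union]
      calc _ ≤ _ := Finset.card_union_le _ _
        _ ≤ k * (2 * n) + 2 * n := by
          apply Nat.add_le_add (ih hk')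
          have hj := hpiece ⟨k, by omega⟩
          have hcs : (⟨k, by omega⟩ : Fin (r + 1)).castSucc = (⟨k, by omega⟩ : Fin (r + 2)) := rfl
          have hsc : (⟨k, by omega⟩ : Fin (r + 1)).succ = (⟨k + 1, by omega⟩ : Fin (r + 2)) := rfl
          rw [hcs, hsc] at hj
          exact piece_changes n c g _ _ hle hj
        _ = (k + 1) * (2 * n) := by ring
  have hlast : (Fin.last (r + 1)) = (⟨r + 1, by omega⟩ : Fin (r + 2)) := rfl
  have := key (r + 1) (le_refl _)
  rw [← hlast, hbN] at this
  calc _ ≤ (r + 1) * (2 * n) := this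
    _ ≤ (r + 1) * (2 * n + 1) := Nat.mul_le_mul_left _ (by omega)
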